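/- arXiv:1108.1410 — 6 statements merged into one kernel-verified Lean document; each statement's English description precedes it below -/
import Mathlib

section
/- Let G be a connected simple undirected graph on N ≥ 2 vertices with Laplacian L, let b0 > 0 and a ≥ b0·λN(L), and set α_k = b0/(a+k). Let m ∈ ℝ^N and define the sequence μ(1) = m, μ(k+1) = (k/(k+1))·(I − α_k L)·μ(k) + (1/(k+1))·m for k ≥ 1. Then μ(k) → (I + b0·L)^{−1} m as k → ∞. -/
open Filter Matrix

/-- The eigenvalues of a Hermitian real matrix, sorted in increasing order:
`sortedEigs L hL ⟨0,_⟩ = λ₁(L) ≤ … ≤ sortedEigs L hL ⟨N-1,_⟩ = λ_N(L)`. -/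
noncomputable def sortedEigs {N : ℕ} (L : Matrix (Fin N) (Fin N) ℝ) (hL : L.IsHermitian) :
    Fin N → ℝ :=
  hL.eigenvalues ∘ Tuple.sort hL.eigenvalues


-- unitary preserves dot product (real)
lemma unitary_dot {N : ℕ} (U : Matrix (Fin N) (Fin N) ℝ) (h : star U * U = 1)
    (x : Fin N → ℝ) : (U *ᵥ x) ⬝ᵥ (U *ᵥ x) = x ⬝ᵥ x := by
  rw [Matrix.dotProduct_mulVec, ← Matrix.mulVec_transpose, Matrix.mulVec_mulVec]
  rw [Matrix.star_eq_conjTranspose, Matrix.conjTranspose_eq_transpose_of_trivial] at h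
  rw [h, Matrix.one_mulVec]

-- diagonal contraction
lemma diag_dot_le {N : ℕ} (d : Fin N → ℝ) (h : ∀ i, |d i| ≤ 1) (w : Fin N → ℝ) :
    (Matrix.diagonal d *ᵥ w) ⬝ᵥ (Matrix.diagonal d *ᵥ w) ≤ w ⬝ᵥ w := by
  simp only [dotProduct, Matrix.mulVec_diagonal]
  apply Finset.sum_le_sum
  intro i _
  have h1 : d i * d i ≤ 1 := by
    have := abs_le.mp (h i)
    nlinarith
  nlinarith [sq_nonneg (w i), sq_nonneg (d i * w i)]

lemma contraction {N : ℕ} (A : Matrix (Fin N) (Fin N) ℝ) (hA : A.IsHermitian) (c : ℝ)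
    (h : ∀ i, |1 - c * hA.eigenvalues i| ≤ 1) (v : Fin N → ℝ) :
    ((1 - c • A) *ᵥ v) ⬝ᵥ ((1 - c • A) *ᵥ v) ≤ v ⬝ᵥ v := by
  set U : Matrix (Fin N) (Fin N) ℝ := (Matrix.IsHermitian.eigenvectorUnitary hA : Matrix (Fin N) (Fin N) ℝ) with hU
  have hUU : star U * U = 1 := by simp [hU]
  have hUU' : U * star U = 1 := by simp [hU]
  have hspec : A = U * Matrix.diagonal hA.eigenvalues * star U := by
    have := hA.spectral_theorem
    simpa using this
  have hdiag : Matrix.diagonal (fun i => 1 - c * hA.eigenvalues i)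
      = 1 - c • Matrix.diagonal hA.eigenvalues := by
    rw [← Matrix.diagonal_smul, ← Matrix.diagonal_one, ← Matrix.diagonal_sub]
    rfl
  have hdecomp : (1 - c • A) = U * Matrix.diagonal (fun i => 1 - c * hA.eigenvalues i) * star U := by
    rw [hdiag, Matrix.mul_sub, Matrix.sub_mul, Matrix.mul_smul, Matrix.smul_mul, mul_one, hUU',
      ← hspec]
  rw [hdecomp]
  have hmv : (U * Matrix.diagonal (fun i => 1 - c * hA.eigenvalues i) * star U) *ᵥ v
      = U *ᵥ (Matrix.diagonal (fun i => 1 - c * hA.eigenvalues i) *ᵥ (star U *ᵥ v)) := by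
    rw [Matrix.mulVec_mulVec, Matrix.mulVec_mulVec]
  rw [hmv, unitary_dot U hUU]
  calc _ ≤ (star U *ᵥ v) ⬝ᵥ (star U *ᵥ v) := diag_dot_le _ h _
    _ = v ⬝ᵥ v := by
        apply unitary_dot (star U) (by rw [star_star, hUU'])


lemma seq_tendsto_zero (y : ℕ → ℝ) (C a : ℝ) (hC : 0 ≤ C) (ha : 0 ≤ a)
    (hy : ∀ k, 0 ≤ y k)
    (hrec : ∀ k : ℕ, 1 ≤ k →
      y (k + 1) ≤ ((k : ℝ) / ((k : ℝ) + 1)) * y k + C / (((k : ℝ) + 1) * (a + (k : ℝ)))) :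
    Tendsto y atTop (nhds 0) := by
  set δ : ℕ → ℝ := fun j => C / (a + 1 + (j : ℝ)) with hδ
  have hδ0 : ∀ j, 0 ≤ δ j := fun j => div_nonneg hC (by positivity)
  set S : ℕ → ℝ := fun n => ∑ j ∈ Finset.range n, δ j with hS
  have hS0 : ∀ n, 0 ≤ S n := fun n => Finset.sum_nonneg fun j _ => hδ0 j
  -- key bound
  have key : ∀ k : ℕ, 1 ≤ k → (k : ℝ) * y k ≤ y 1 + S (k - 1) := by
    intro k hk
    induction k, hk using Nat.le_induction with
    | base => simp [hS]
    | succ n hn ih =>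
      have hn1 : (0 : ℝ) < (n : ℝ) + 1 := by positivity
      have hank : (0 : ℝ) < a + (n : ℝ) := by
        have : (1 : ℝ) ≤ (n : ℝ) := by exact_mod_cast hn
        linarith
      have h1 : ((n : ℝ) + 1) * y (n + 1) ≤ (n : ℝ) * y n + C / (a + (n : ℝ)) := by
        have := hrec n hn
        have h2 : ((n : ℝ) + 1) * y (n + 1) ≤ ((n : ℝ) + 1) * (((n : ℝ) / ((n : ℝ) + 1)) * y n + C / (((n : ℝ) + 1) * (a + (n : ℝ)))) :=
          mul_le_mul_of_nonneg_left this (by positivity)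
        calc ((n : ℝ) + 1) * y (n + 1) ≤ _ := h2
          _ = (n : ℝ) * y n + C / (a + (n : ℝ)) := by
            field_simp
      have hδval : C / (a + (n : ℝ)) = δ (n - 1) := by
        rw [hδ]
        congr 1
        have : ((n - 1 : ℕ) : ℝ) = (n : ℝ) - 1 := by
          rw [Nat.cast_sub hn]; norm_num
        rw [this]; ring
      have hsum : S (n + 1 - 1) = S (n - 1) + δ (n - 1) := by
        obtain ⟨p, rfl⟩ : ∃ p, n = p + 1 := ⟨n - 1, by omega⟩
        simp only [hS]
        rw [show p + 1 + 1 - 1 = p + 1 from rfl, show p + 1 - 1 = p from rfl,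
          Finset.sum_range_succ]
      push_cast
      calc ((n : ℝ) + 1) * y (n + 1) ≤ (n : ℝ) * y n + C / (a + (n : ℝ)) := h1
        _ ≤ (y 1 + S (n - 1)) + δ (n - 1) := by rw [hδval]; linarith
        _ = y 1 + S (n + 1 - 1) := by rw [hsum]; ring
  -- limits
  have hδlim : Tendsto δ atTop (nhds 0) := by
    apply Tendsto.div_atTop (tendsto_const_nhds (x := C))
    apply tendsto_atTop_add_const_left
    exact tendsto_natCast_atTop_atTop
  have hces : Tendsto (fun n : ℕ => (n : ℝ)⁻¹ • S n) atTop (nhds 0) := by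
    simpa using hδlim.cesaro
  have hces' : Tendsto (fun k : ℕ => ((k - 1 : ℕ) : ℝ)⁻¹ * S (k - 1)) atTop (nhds 0) := by
    have := hces.comp (tendsto_sub_atTop_nat 1)
    exact this
  have hconst : Tendsto (fun k : ℕ => y 1 / (k : ℝ)) atTop (nhds 0) :=
    tendsto_const_div_atTop_nhds_zero_nat _
  have hup : Tendsto (fun k : ℕ => y 1 / (k : ℝ) + ((k - 1 : ℕ) : ℝ)⁻¹ * S (k - 1)) atTop (nhds 0) := by
    simpa using hconst.add hces'
  -- squeeze
  apply tendsto_of_tendsto_of_tendsto_of_le_of_le' tendsto_const_nhds hup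
  · exact Eventually.of_forall hy
  · filter_upwards [eventually_ge_atTop 2] with k hk
    have hk1 : (1 : ℕ) ≤ k := by omega
    have hkpos : (0 : ℝ) < (k : ℝ) := by positivity
    have hkm1 : (0 : ℝ) < ((k - 1 : ℕ) : ℝ) := by
      have : (1 : ℕ) ≤ k - 1 := by omega
      exact_mod_cast Nat.lt_of_lt_of_le Nat.zero_lt_one this
    have h1 : y k ≤ (y 1 + S (k - 1)) / (k : ℝ) := by
      rw [le_div_iff₀ hkpos, mul_comm]
      exact key k hk1
    have h2 : S (k - 1) / (k : ℝ) ≤ S (k - 1) / ((k - 1 : ℕ) : ℝ) := by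
      apply div_le_div_of_nonneg_left (hS0 _) hkm1
      have : ((k - 1 : ℕ) : ℝ) ≤ (k : ℝ) := by exact_mod_cast Nat.sub_le k 1
      exact this
    calc y k ≤ (y 1 + S (k - 1)) / (k : ℝ) := h1
      _ = y 1 / (k : ℝ) + S (k - 1) / (k : ℝ) := by ring
      _ ≤ y 1 / (k : ℝ) + ((k - 1 : ℕ) : ℝ)⁻¹ * S (k - 1) := by
          rw [inv_mul_eq_div]; linarith


noncomputable def nn {N : ℕ} (v : Fin N → ℝ) : ℝ := ‖(WithLp.equiv 2 (Fin N → ℝ)).symm v‖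

lemma nn_eq {N : ℕ} (v : Fin N → ℝ) : nn v = Real.sqrt (v ⬝ᵥ v) := by
  rw [nn, EuclideanSpace.norm_eq]
  congr 1
  simp [dotProduct, sq]

lemma nn_nonneg {N : ℕ} (v : Fin N → ℝ) : 0 ≤ nn v := norm_nonneg _

lemma nn_add_le {N : ℕ} (u v : Fin N → ℝ) : nn (u + v) ≤ nn u + nn v := by
  rw [nn, nn, nn]
  rw [show (WithLp.equiv 2 (Fin N → ℝ)).symm (u + v)
    = (WithLp.equiv 2 (Fin N → ℝ)).symm u + (WithLp.equiv 2 (Fin N → ℝ)).symm v from rfl]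
  exact norm_add_le _ _

lemma nn_smul {N : ℕ} (r : ℝ) (v : Fin N → ℝ) : nn (r • v) = |r| * nn v := by
  rw [nn, nn]
  rw [show (WithLp.equiv 2 (Fin N → ℝ)).symm (r • v)
    = r • (WithLp.equiv 2 (Fin N → ℝ)).symm v from rfl]
  rw [norm_smul, Real.norm_eq_abs]

lemma nn_coord {N : ℕ} (v : Fin N → ℝ) (i : Fin N) : |v i| ≤ nn v := by
  rw [nn_eq, ← Real.sqrt_sq_eq_abs (v i)]
  apply Real.sqrt_le_sqrt
  rw [sq]
  have : v i * v i = (fun j => v j * v j) i := rfl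
  rw [this, dotProduct]
  exact Finset.single_le_sum (fun j _ => mul_self_nonneg (v j)) (Finset.mem_univ i)

lemma nn_le_of_dot_le {N : ℕ} (u v : Fin N → ℝ) (h : u ⬝ᵥ u ≤ v ⬝ᵥ v) : nn u ≤ nn v := by
  rw [nn_eq, nn_eq]
  exact Real.sqrt_le_sqrt h

lemma eig_le_max {N : ℕ} (hN : 2 ≤ N) (L : Matrix (Fin N) (Fin N) ℝ) (hL : L.IsHermitian)
    (i : Fin N) :
    hL.eigenvalues i ≤ (hL.eigenvalues ∘ Tuple.sort hL.eigenvalues) ⟨N - 1, Nat.sub_lt (by omega) one_pos⟩ := by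
  have hmono := Tuple.monotone_sort hL.eigenvalues
  have : hL.eigenvalues i
      = (hL.eigenvalues ∘ Tuple.sort hL.eigenvalues) ((Tuple.sort hL.eigenvalues)⁻¹ i) := by
    simp
  rw [this]
  apply hmono
  rw [Fin.le_def]
  simp only []
  have := ((Tuple.sort hL.eigenvalues)⁻¹ i).isLt
  omega

/-- Convergence of the mean recursion of the consensus+innovations detector:
with `α_k = b0/(a+k)`, `a ≥ b0·λ_N(L)`, the sequence
`μ(k+1) = (k/(k+1))(I − α_k L)μ(k) + (1/(k+1))m` converges to `(I + b0·L)⁻¹ m`. -/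
theorem mean_recursion_limit (N : ℕ) (hN : 2 ≤ N) (G : SimpleGraph (Fin N))
    [DecidableRel G.Adj] (hconn : G.Connected) (b0 a : ℝ) (hb0 : 0 < b0)
    (ha : b0 * sortedEigs (G.lapMatrix ℝ)
        (SimpleGraph.posSemidef_lapMatrix ℝ G).1 ⟨N - 1, by omega⟩ ≤ a)
    (m : Fin N → ℝ) (μ : ℕ → Fin N → ℝ) (hμ1 : μ 1 = m)
    (hrec : ∀ k : ℕ, 1 ≤ k →
      μ (k + 1) = ((k : ℝ) / ((k : ℝ) + 1)) •
          ((1 - (b0 / (a + (k : ℝ))) • G.lapMatrix ℝ).mulVec (μ k)) +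
        ((1 : ℝ) / ((k : ℝ) + 1)) • m) :
    Tendsto μ atTop (nhds ((1 + b0 • G.lapMatrix ℝ)⁻¹.mulVec m)) := by
  have hsd : (G.lapMatrix ℝ).PosSemidef := SimpleGraph.posSemidef_lapMatrix ℝ G
  set L := G.lapMatrix ℝ with hLdef
  set hL := (SimpleGraph.posSemidef_lapMatrix ℝ G).1 with hLh
  set lmax : ℝ := sortedEigs L hL ⟨N - 1, by omega⟩ with hlmax
  have heig_nonneg : ∀ i, 0 ≤ hL.eigenvalues i := hsd.eigenvalues_nonneg
  have heig_le : ∀ i, hL.eigenvalues i ≤ lmax := by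
    intro i
    have := eig_le_max hN L hL i
    rw [hlmax]
    exact this
  have hlmax0 : 0 ≤ lmax := le_trans (heig_nonneg ⟨0, by omega⟩) (heig_le _)
  have ha0 : 0 ≤ a := le_trans (mul_nonneg hb0.le hlmax0) ha
  -- invertibility
  have hsmul : (b0 • L).PosSemidef := by
    constructor
    · show (b0 • L)ᴴ = b0 • L
      rw [Matrix.conjTranspose_smul, star_trivial, hL]
    · intro x
      have h := mul_nonneg hb0.le (hsd.2 x)
      simp only [Finsupp.mul_sum, star_trivial] at h
      simp only [Matrix.smul_apply, smul_eq_mul, star_trivial]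
      refine le_of_le_of_eq h ?_
      congr 1; funext i xi; congr 1; funext j xj; ring
  have hBpd : (1 + b0 • L).PosDef := Matrix.PosDef.one.add_posSemidef hsmul
  set B := 1 + b0 • L with hBdef
  set ms := B⁻¹ *ᵥ m with hms
  have hBm : B *ᵥ ms = m := by
    rw [hms, Matrix.mulVec_mulVec, Matrix.mul_nonsing_inv _ (isUnit_iff_ne_zero.mpr hBpd.det_pos.ne'),
      Matrix.one_mulVec]
  have hm_eq : m = ms + b0 • (L *ᵥ ms) := by
    rw [← hBm, hBdef, Matrix.add_mulVec, Matrix.one_mulVec, Matrix.smul_mulVec]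
  set t := L *ᵥ ms with ht
  set y : ℕ → ℝ := fun k => nn (μ k - ms) with hy
  -- spectral condition
  have hden : ∀ k : ℕ, 1 ≤ k → (0 : ℝ) < a + (k : ℝ) := by
    intro k hk
    have : (1 : ℝ) ≤ (k : ℝ) := by exact_mod_cast hk
    linarith
  have habs : ∀ k : ℕ, 1 ≤ k → ∀ i, |1 - (b0 / (a + (k : ℝ))) * hL.eigenvalues i| ≤ 1 := by
    intro k hk i
    have hd := hden k hk
    have h1 : 0 ≤ (b0 / (a + (k : ℝ))) * hL.eigenvalues i :=
      mul_nonneg (div_nonneg hb0.le hd.le) (heig_nonneg i)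
    have h2 : (b0 / (a + (k : ℝ))) * hL.eigenvalues i ≤ 1 := by
      rw [div_mul_eq_mul_div, div_le_one hd]
      calc b0 * hL.eigenvalues i ≤ b0 * lmax := by
            exact mul_le_mul_of_nonneg_left (heig_le i) hb0.le
        _ ≤ a := ha
        _ ≤ a + (k : ℝ) := by
            have : (1 : ℝ) ≤ (k : ℝ) := by exact_mod_cast hk
            linarith
    rw [abs_le]
    constructor <;> linarith
  -- the key identity
  have hid : ∀ k : ℕ, 1 ≤ k → μ (k + 1) - ms
      = ((k : ℝ) / ((k : ℝ) + 1)) • ((1 - (b0 / (a + (k : ℝ))) • L) *ᵥ (μ k - ms))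
        + ((b0 * a) / ((((k : ℝ) + 1)) * (a + (k : ℝ)))) • t := by
    intro k hk
    have hd := (hden k hk).ne'
    have hk1 : ((k : ℝ) + 1) ≠ 0 := by positivity
    rw [hrec k hk]
    funext i
    simp only [Matrix.sub_mulVec, Matrix.one_mulVec, Matrix.smul_mulVec,
      Matrix.mulVec_sub, ht, Pi.add_apply, Pi.sub_apply, Pi.smul_apply, smul_eq_mul]
    rw [hm_eq]
    simp only [Pi.add_apply, Pi.smul_apply, smul_eq_mul, Pi.sub_apply, ht]
    field_simp
    ring
  -- norm recursion
  have hrec2 : ∀ k : ℕ, 1 ≤ k →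
      y (k + 1) ≤ ((k : ℝ) / ((k : ℝ) + 1)) * y k
        + (b0 * a * nn t) / (((k : ℝ) + 1) * (a + (k : ℝ))) := by
    intro k hk
    have hd := hden k hk
    have hk0 : (0 : ℝ) ≤ (k : ℝ) := Nat.cast_nonneg k
    have hcoef1 : (0 : ℝ) ≤ (k : ℝ) / ((k : ℝ) + 1) := by positivity
    have hcoef2 : (0 : ℝ) ≤ (b0 * a) / ((((k : ℝ) + 1)) * (a + (k : ℝ))) := by positivity
    have hcontr : nn ((1 - (b0 / (a + (k : ℝ))) • L) *ᵥ (μ k - ms)) ≤ y k := by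
      apply nn_le_of_dot_le
      exact contraction L hL _ (habs k hk) _
    calc y (k + 1) = nn (((k : ℝ) / ((k : ℝ) + 1)) • ((1 - (b0 / (a + (k : ℝ))) • L) *ᵥ (μ k - ms))
          + ((b0 * a) / ((((k : ℝ) + 1)) * (a + (k : ℝ)))) • t) := by
            show nn (μ (k + 1) - ms) = _
            rw [hid k hk]
      _ ≤ nn (((k : ℝ) / ((k : ℝ) + 1)) • ((1 - (b0 / (a + (k : ℝ))) • L) *ᵥ (μ k - ms)))
          + nn (((b0 * a) / ((((k : ℝ) + 1)) * (a + (k : ℝ)))) • t) := nn_add_le _ _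
      _ = ((k : ℝ) / ((k : ℝ) + 1)) * nn ((1 - (b0 / (a + (k : ℝ))) • L) *ᵥ (μ k - ms))
          + ((b0 * a) / ((((k : ℝ) + 1)) * (a + (k : ℝ)))) * nn t := by
            rw [nn_smul, nn_smul, abs_of_nonneg hcoef1, abs_of_nonneg hcoef2]
      _ ≤ ((k : ℝ) / ((k : ℝ) + 1)) * y k
          + (b0 * a * nn t) / (((k : ℝ) + 1) * (a + (k : ℝ))) := by
            have h2 : ((b0 * a) / ((((k : ℝ) + 1)) * (a + (k : ℝ)))) * nn t
                = (b0 * a * nn t) / (((k : ℝ) + 1) * (a + (k : ℝ))) := by ring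
            rw [h2]
            have := mul_le_mul_of_nonneg_left hcontr hcoef1
            linarith
  have hyto : Tendsto y atTop (nhds 0) :=
    seq_tendsto_zero y (b0 * a * nn t) a (mul_nonneg (mul_nonneg hb0.le ha0) (nn_nonneg t)) ha0
      (fun k => nn_nonneg _) hrec2
  -- conclude
  rw [tendsto_pi_nhds]
  intro i
  have hlow : Tendsto (fun k => ms i - y k) atTop (nhds (ms i)) := by
    simpa using tendsto_const_nhds.sub hyto
  have hup : Tendsto (fun k => ms i + y k) atTop (nhds (ms i)) := by
    simpa using tendsto_const_nhds.add hyto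
  apply tendsto_of_tendsto_of_tendsto_of_le_of_le hlow hup
  · intro k
    have := abs_le.mp (nn_coord (μ k - ms) i)
    have h1 : -(y k) ≤ μ k i - ms i := by
      simpa [hy] using this.1
    show ms i - y k ≤ μ k i
    linarith
  · intro k
    have := abs_le.mp (nn_coord (μ k - ms) i)
    have h2 : μ k i - ms i ≤ y k := by
      simpa [hy] using this.2
    show μ k i ≤ ms i + y k
    linarith
end

section
/- Let G be a connected simple undirected graph on N ≥ 2 vertices with Laplacian L, let b0 > 0, and let m ∈ ℝ^N. Then for every coordinate i, |[(I + b0·L)^{−1} m]_i − (1/N)·∑_{j=1}^N m_j| ≤ ‖m‖ / (1 + b0·λ2(L)), where ‖·‖ is the Euclidean norm. -/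
open Filter Matrix

/-- Each entry of `(I + b0·L)⁻¹ m` deviates from the average `(1/N)·∑ m_j` by at most
`‖m‖/(1 + b0·λ₂(L))`, where `λ₂(L)` is the algebraic connectivity. -/
theorem limit_mean_deviation_bound (N : ℕ) (hN : 2 ≤ N) (G : SimpleGraph (Fin N))
    [DecidableRel G.Adj] (hconn : G.Connected) (b0 : ℝ) (hb0 : 0 < b0)
    (m : Fin N → ℝ) (i : Fin N) :
    |((1 + b0 • G.lapMatrix ℝ)⁻¹.mulVec m) i - (1 / (N : ℝ)) * ∑ j, m j| ≤
      Real.sqrt (∑ j, m j ^ 2) /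
        (1 + b0 * sortedEigs (G.lapMatrix ℝ)
          (SimpleGraph.posSemidef_lapMatrix ℝ G).1 ⟨1, by omega⟩) := by
  classical
  set L := G.lapMatrix ℝ with hLdef
  have hPSD : L.PosSemidef := SimpleGraph.posSemidef_lapMatrix ℝ G
  have hL : L.IsHermitian := hPSD.1
  set μ := hL.eigenvalues with hμdef
  set B := hL.eigenvectorBasis with hBdef
  set U : Matrix (Fin N) (Fin N) ℝ := (hL.eigenvectorUnitary : Matrix (Fin N) (Fin N) ℝ) with hUdef
  have hμ0 : ∀ k, 0 ≤ μ k := hPSD.eigenvalues_nonneg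
  set d : Fin N → ℝ := fun k => 1 + b0 * μ k with hddef
  have hd : ∀ k, 0 < d k := fun k => by
    have h := hμ0 k; simp only [hddef]; positivity
  have hUU : U * star U = 1 := mem_unitaryGroup_iff.mp hL.eigenvectorUnitary.2
  have hUU' : star U * U = 1 := mem_unitaryGroup_iff'.mp hL.eigenvectorUnitary.2
  have hspec : L = U * diagonal μ * star U := by simpa using hL.spectral_theorem
  -- spectral decomposition of 1 + b0 • L
  have h1 : (1 : Matrix (Fin N) (Fin N) ℝ) + b0 • L = U * diagonal d * star U := by
    have hdiag : diagonal d = 1 + b0 • diagonal μ := by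
      rw [← diagonal_one, ← diagonal_smul, ← diagonal_add]
      congr 1
    rw [hdiag, mul_add, add_mul, mul_one, hUU, Matrix.mul_smul, Matrix.smul_mul, ← hspec]
  -- the inverse
  have hinv : (1 + b0 • L)⁻¹ = U * diagonal (fun k => (d k)⁻¹) * star U := by
    apply inv_eq_right_inv
    rw [h1]
    calc U * diagonal d * star U * (U * diagonal (fun k => (d k)⁻¹) * star U)
        = U * diagonal d * (star U * U) * diagonal (fun k => (d k)⁻¹) * star U := by
          simp only [Matrix.mul_assoc]
      _ = U * (diagonal d * diagonal (fun k => (d k)⁻¹)) * star U := by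
          rw [hUU']; simp only [Matrix.mul_one, Matrix.mul_assoc]
      _ = 1 := by
          rw [diagonal_mul_diagonal]
          have : (fun k => d k * (d k)⁻¹) = fun _ => (1:ℝ) := by
            funext k; exact mul_inv_cancel₀ (hd k).ne'
          rw [this, diagonal_one, Matrix.mul_one, hUU]
  -- coordinates
  set c : Fin N → ℝ := fun k => ∑ j, B k j * m j with hcdef
  have happ : ((1 + b0 • L)⁻¹ *ᵥ m) i = ∑ k, B k i * ((d k)⁻¹ * c k) := by
    rw [hinv, ← Matrix.mulVec_mulVec, ← Matrix.mulVec_mulVec]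
    simp only [mulVec, dotProduct, mul_diagonal, Matrix.star_apply, star_trivial,
      diagonal_apply, ite_mul, zero_mul, Finset.sum_ite_eq, Finset.mem_univ, if_true]
    refine Finset.sum_congr rfl fun k _ => ?_
    simp only [hUdef, hcdef, IsHermitian.eigenvectorUnitary_apply]
    simp only [← hBdef, Finset.mul_sum, mul_comm, mul_assoc, mul_left_comm]
  -- kernel has dimension 1
  have hcardCC : Fintype.card G.ConnectedComponent = 1 := by
    refine Fintype.card_eq_one_iff.2 ⟨G.connectedComponentMk i, ?_⟩
    intro c
    induction c using SimpleGraph.ConnectedComponent.ind with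
    | _ v => exact SimpleGraph.ConnectedComponent.sound (hconn.preconnected v i)
  have hker : Module.finrank ℝ (LinearMap.ker (Matrix.toLin' L)) = 1 := by
    rw [← SimpleGraph.card_connectedComponent_eq_finrank_ker_toLin'_lapMatrix, hcardCC]
  have hrank : L.rank + 1 = N := by
    have h := LinearMap.finrank_range_add_finrank_ker (Matrix.toLin' L)
    rw [hker] at h
    rw [Matrix.toLin'_apply'] at h
    simpa [Matrix.rank] using h
  have hcard0 : Fintype.card {k // μ k = 0} = 1 := by
    have h1 : L.rank = Fintype.card {k // μ k ≠ 0} := hL.rank_eq_card_non_zero_eigs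
    have h2 : Fintype.card {k // ¬ μ k = 0} = N - Fintype.card {k // μ k = 0} := by
      simpa using Fintype.card_subtype_compl (fun k => μ k = 0)
    have h3 : Fintype.card {k // μ k = 0} ≤ N := by
      simpa using Fintype.card_subtype_le (fun k => μ k = 0)
    rw [h1, h2] at hrank
    omega
  obtain ⟨⟨k0, hk0⟩, huniq⟩ := Fintype.card_eq_one_iff.1 hcard0
  have huniq' : ∀ k, μ k = 0 → k = k0 := fun k hk => congrArg Subtype.val (huniq ⟨k, hk⟩)
  -- the eigenvector for eigenvalue 0 is constant
  have hLv : L *ᵥ ⇑(B k0) = 0 := by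
    rw [hBdef, hL.mulVec_eigenvectorBasis, show hL.eigenvalues k0 = 0 from hk0, zero_smul]
  have hconstall : ∀ p q : Fin N, B k0 p = B k0 q := by
    have h := (SimpleGraph.lapMatrix_mulVec_eq_zero_iff_forall_reachable G (x := ⇑(B k0))).1
      hLv
    exact fun p q => h p q (hconn.preconnected p q)
  set a : ℝ := B k0 i with hadef
  have hconst : ∀ j, B k0 j = a := fun j => hconstall j i
  have hnorm1 : ∑ j, B k0 j * B k0 j = 1 := by
    have h := orthonormal_iff_ite.mp B.orthonormal k0 k0
    simp only [if_true, PiLp.inner_apply, RCLike.inner_apply, conj_trivial] at h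
    simpa [mul_comm] using h
  have ha2 : (N : ℝ) * (a * a) = 1 := by
    rw [← hnorm1]
    simp only [hconst, Finset.sum_const, Finset.card_univ, Fintype.card_fin, nsmul_eq_mul]
  have hck0 : c k0 = a * ∑ j, m j := by
    simp only [hcdef]
    rw [Finset.mul_sum]
    exact Finset.sum_congr rfl fun j _ => by rw [hconst j]
  have hterm0 : B k0 i * ((d k0)⁻¹ * c k0) = (1 / (N : ℝ)) * ∑ j, m j := by
    have hdk0 : d k0 = 1 := by simp [hddef, show μ k0 = 0 from hk0]
    have haa : a * a = 1 / (N : ℝ) := by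
      have hNpos : (0:ℝ) < (N:ℝ) := by exact_mod_cast (by omega : 0 < N)
      field_simp
      linarith [ha2]
    rw [hdk0, inv_one, one_mul, hck0, ← hadef, ← mul_assoc, haa]
  have hsplit : ((1 + b0 • L)⁻¹ *ᵥ m) i - (1 / (N : ℝ)) * ∑ j, m j
      = ∑ k ∈ Finset.univ.erase k0, B k i * ((d k)⁻¹ * c k) := by
    rw [happ, ← hterm0, ← Finset.add_sum_erase _ _ (Finset.mem_univ k0)]
    ring
  -- λ2 facts
  haveI : NeZero N := ⟨by omega⟩
  set j1 : Fin N := ⟨1, by omega⟩ with hj1def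
  have hmono : Monotone (μ ∘ Tuple.sort μ) := Tuple.monotone_sort μ
  set lam2 : ℝ := μ (Tuple.sort μ j1) with hl2def
  have hl2nonneg : 0 ≤ lam2 := hμ0 _
  have hb1 : (0:ℝ) < 1 + b0 * lam2 := by positivity
  have hs0 : μ (Tuple.sort μ (0 : Fin N)) = 0 := by
    refine le_antisymm ?_ (hμ0 _)
    have h := hmono (Fin.zero_le ((Tuple.sort μ).symm k0))
    rw [Function.comp_apply, Function.comp_apply, Equiv.apply_symm_apply] at h
    rw [hk0] at h
    exact h
  have hge : ∀ k, k ≠ k0 → lam2 ≤ μ k := by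
    intro k hk
    have hj : Tuple.sort μ ((Tuple.sort μ).symm k) = k := Equiv.apply_symm_apply _ k
    have hjne : (Tuple.sort μ).symm k ≠ (0 : Fin N) := by
      intro h0
      exact hk (huniq' k (by rw [← hj, h0, hs0]))
    have hle : j1 ≤ (Tuple.sort μ).symm k := by
      rw [Fin.le_def]
      have hv : ((Tuple.sort μ).symm k).val ≠ 0 := fun h => hjne (Fin.ext (by simpa using h))
      simp only [hj1def]
      omega
    have := hmono hle
    rw [Function.comp_apply, Function.comp_apply, hj] at this
    exact this
  -- row of U is a unit vector
  have hrow : ∑ k, B k i * B k i = 1 := by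
    have h := congrFun (congrFun hUU i) i
    simpa [Matrix.mul_apply, Matrix.star_apply, Matrix.one_apply, hUdef,
      IsHermitian.eigenvectorUnitary_apply, ← hBdef] using h
  -- norm preservation
  have hc2 : ∑ k, c k ^ 2 = ∑ j, m j ^ 2 := by
    have hmv : ∀ k, c k = (m ᵥ* U) k := by
      intro k
      simp [hcdef, hUdef, Matrix.vecMul, dotProduct, mul_comm, ← hBdef]
    have hUT : U * Uᵀ = 1 := by
      rw [← Matrix.conjTranspose_eq_transpose_of_trivial]
      exact hUU
    calc ∑ k, c k ^ 2 = (m ᵥ* U) ⬝ᵥ (m ᵥ* U) := by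
          simp [dotProduct, hmv, pow_two]
      _ = m ⬝ᵥ U *ᵥ (m ᵥ* U) := (Matrix.dotProduct_mulVec m U (m ᵥ* U)).symm
      _ = ∑ j, m j ^ 2 := by
          rw [← Matrix.mulVec_transpose, Matrix.mulVec_mulVec, hUT, Matrix.one_mulVec]
          simp [dotProduct, pow_two]
  -- main estimate
  have key : |∑ k ∈ Finset.univ.erase k0, B k i * ((d k)⁻¹ * c k)| ≤
      Real.sqrt (∑ j, m j ^ 2) / (1 + b0 * lam2) := by
    calc |∑ k ∈ Finset.univ.erase k0, B k i * ((d k)⁻¹ * c k)|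
        ≤ ∑ k ∈ Finset.univ.erase k0, |B k i * ((d k)⁻¹ * c k)| :=
          Finset.abs_sum_le_sum_abs _ _
      _ ≤ ∑ k ∈ Finset.univ.erase k0, |B k i| * |c k| * (1 + b0 * lam2)⁻¹ := by
          refine Finset.sum_le_sum fun k hk => ?_
          have hkne : k ≠ k0 := Finset.ne_of_mem_erase hk
          have h1k : 1 + b0 * lam2 ≤ d k := by
            simp only [hddef]
            have := hge k hkne
            nlinarith
          have hinvle : (d k)⁻¹ ≤ (1 + b0 * lam2)⁻¹ := inv_anti₀ hb1 h1k
          rw [abs_mul, abs_mul, abs_inv, abs_of_pos (hd k)]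
          calc |B k i| * ((d k)⁻¹ * |c k|)
              ≤ |B k i| * ((1 + b0 * lam2)⁻¹ * |c k|) := by
                apply mul_le_mul_of_nonneg_left _ (abs_nonneg _)
                exact mul_le_mul_of_nonneg_right hinvle (abs_nonneg _)
            _ = |B k i| * |c k| * (1 + b0 * lam2)⁻¹ := by ring
      _ ≤ ∑ k, |B k i| * |c k| * (1 + b0 * lam2)⁻¹ := by
          refine Finset.sum_le_sum_of_subset_of_nonneg (Finset.subset_univ _) fun k _ _ => ?_
          have := abs_nonneg (B k i)
          have := abs_nonneg (c k)
          positivity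
      _ = (∑ k, |B k i| * |c k|) * (1 + b0 * lam2)⁻¹ := by rw [Finset.sum_mul]
      _ ≤ (Real.sqrt (∑ k, |B k i| ^ 2) * Real.sqrt (∑ k, |c k| ^ 2)) * (1 + b0 * lam2)⁻¹ := by
          exact mul_le_mul_of_nonneg_right (Real.sum_mul_le_sqrt_mul_sqrt _ _ _)
            (inv_nonneg.mpr hb1.le)
      _ = Real.sqrt (∑ j, m j ^ 2) / (1 + b0 * lam2) := by
          have e1 : ∑ k, |B k i| ^ 2 = 1 := by
            rw [← hrow]
            exact Finset.sum_congr rfl fun k _ => by rw [sq_abs, pow_two]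
          have e2 : ∑ k, |c k| ^ 2 = ∑ j, m j ^ 2 := by
            rw [← hc2]
            exact Finset.sum_congr rfl fun k _ => sq_abs _
          rw [e1, e2, Real.sqrt_one, one_mul, div_eq_mul_inv]
  rw [hsplit]
  exact key
end

section
/- Let L be a symmetric positive semidefinite N×N real matrix and let a, b0 > 0. Define, for each integer k ≥ 1, Γ(k) = I − (k+1)·(I + b0·L)^{−1} + k·(I − (b0/(a+k))·L)·(I + b0·L)^{−1}. Then every eigenvector q of L with eigenvalue λ is an eigenvector of Γ(k) with eigenvalue a·b0·λ/((1 + b0·λ)(a + k)), and consequently there exists c > 0 such that the spectral norm satisfies ‖Γ(k)‖ ≤ c/k for all k ≥ 1. -/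
set_option synthInstance.maxHeartbeats 1000000
set_option maxHeartbeats 1000000


open Filter Matrix

/-- The spectral (ℓ₂-operator) norm of a real square matrix. -/
noncomputable def specNorm {N : ℕ} (A : Matrix (Fin N) (Fin N) ℝ) : ℝ :=
  ‖Matrix.toEuclideanCLM (𝕜 := ℝ) A‖

/-- The perturbation matrix `Γ(k) = I − (k+1)(I+b0·L)⁻¹ + k(I − (b0/(a+k))L)(I+b0·L)⁻¹`
has the same eigenvectors as `L`, with eigenvalue `a·b0·λ/((1+b0·λ)(a+k))` on an
eigenvector of `L` with eigenvalue `λ`; consequently `‖Γ(k)‖ ≤ c/k` for some `c > 0`. -/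
theorem gamma_eigen_and_norm_bound (N : ℕ) (L : Matrix (Fin N) (Fin N) ℝ)
    (hL : L.PosSemidef) (a b0 : ℝ) (ha : 0 < a) (hb0 : 0 < b0)
    (Γ : ℕ → Matrix (Fin N) (Fin N) ℝ)
    (hΓ : ∀ k : ℕ, Γ k =
      1 - ((k : ℝ) + 1) • (1 + b0 • L)⁻¹ +
        (k : ℝ) • ((1 - (b0 / (a + (k : ℝ))) • L) * (1 + b0 • L)⁻¹)) :
    (∀ (k : ℕ) (q : Fin N → ℝ) (lam : ℝ), q ≠ 0 → L.mulVec q = lam • q →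
      (Γ k).mulVec q = (a * b0 * lam / ((1 + b0 * lam) * (a + (k : ℝ)))) • q) ∧
    ∃ c : ℝ, 0 < c ∧ ∀ k : ℕ, 1 ≤ k → specNorm (Γ k) ≤ c / (k : ℝ) := by
  set M : Matrix (Fin N) (Fin N) ℝ := 1 + b0 • L with hMdef
  have hsm : (b0 • L).PosSemidef := by
    refine Matrix.PosSemidef.of_dotProduct_mulVec_nonneg ?_ ?_
    · unfold Matrix.IsHermitian
      rw [conjTranspose_smul, hL.1.eq]
      simp
    · intro x
      rw [smul_mulVec, dotProduct_smul, smul_eq_mul]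
      exact mul_nonneg hb0.le (hL.dotProduct_mulVec_nonneg x)
  have hM : M.PosDef := Matrix.PosDef.one.add_posSemidef hsm
  have hdet : IsUnit M.det := (Matrix.isUnit_iff_isUnit_det _).1 hM.isUnit
  have hMinv : M⁻¹ * M = 1 := Matrix.nonsing_inv_mul M hdet
  have hMinv' : M * M⁻¹ = 1 := Matrix.mul_nonsing_inv M hdet
  -- key simplification : Γ k = (a*b0/(a+k)) • (L * M⁻¹)
  have h1 : (1 : Matrix (Fin N) (Fin N) ℝ) = M⁻¹ + b0 • (L * M⁻¹) := by
    rw [← hMinv']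
    nth_rewrite 1 [hMdef]
    rw [add_mul, one_mul, smul_mul_assoc]
  have hsimp : ∀ k : ℕ, Γ k = (a * b0 / (a + (k : ℝ))) • (L * M⁻¹) := by
    intro k
    have hak : (0 : ℝ) < a + (k : ℝ) := by positivity
    rw [hΓ k, sub_mul, one_mul, smul_mul_assoc]
    nth_rewrite 1 [h1]
    match_scalars
    · ring
    · field_simp
      ring
  constructor
  · -- eigenvector part
    intro k q lam hq hEig
    have hlam : 0 ≤ lam := by
      have h2 := hL.dotProduct_mulVec_nonneg q
      rw [hEig] at h2
      have hqq : 0 < q ⬝ᵥ q := by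
        have := (Matrix.dotProduct_star_self_pos_iff (v := q)).2 hq
        simpa using this
      simp only [star_trivial, dotProduct_smul, smul_eq_mul] at h2
      nlinarith
    have h1b : (0 : ℝ) < 1 + b0 * lam := by nlinarith
    have hak : (0 : ℝ) < a + (k : ℝ) := by positivity
    have hMq : M.mulVec q = (1 + b0 * lam) • q := by
      rw [hMdef, add_mulVec, one_mulVec, smul_mulVec, hEig]
      ext i
      simp only [Pi.add_apply, Pi.smul_apply, smul_eq_mul]
      ring
    have hinvq : M⁻¹.mulVec q = (1 + b0 * lam)⁻¹ • q := by
      have e : M⁻¹.mulVec (M.mulVec q) = q := by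
        rw [Matrix.mulVec_mulVec, hMinv, one_mulVec]
      rw [hMq, Matrix.mulVec_smul] at e
      rw [eq_inv_smul_iff₀ h1b.ne']
      exact e
    have hs : a * b0 / (a + (k : ℝ)) * (1 + b0 * lam)⁻¹ * lam
        = a * b0 * lam / ((1 + b0 * lam) * (a + (k : ℝ))) := by
      field_simp [h1b.ne', hak.ne']
    rw [hsimp k, smul_mulVec, ← Matrix.mulVec_mulVec, hinvq, Matrix.mulVec_smul, hEig,
      smul_smul, smul_smul, hs]
  · -- norm bound
    set C : ℝ := specNorm (L * M⁻¹) with hC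
    have hC0 : 0 ≤ C := norm_nonneg _
    refine ⟨a * b0 * C + 1, by positivity, fun k hk => ?_⟩
    have hk0 : (0 : ℝ) < (k : ℝ) := by exact_mod_cast hk
    have hak : (0 : ℝ) < a + (k : ℝ) := by positivity
    have hnorm : specNorm (Γ k) = (a * b0 / (a + (k : ℝ))) * C := by
      rw [hsimp k]
      unfold specNorm
      rw [_root_.map_smul]
      rw [norm_smul (a * b0 / (a + (k : ℝ))) (toEuclideanCLM (𝕜 := ℝ) (L * M⁻¹)),
        Real.norm_eq_abs, abs_of_pos (by positivity)]
      rfl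
    rw [hnorm, div_mul_eq_mul_div, div_le_div_iff₀ hak hk0]
    nlinarith [mul_nonneg (mul_nonneg ha.le hb0.le) hC0,
      mul_nonneg (mul_nonneg (mul_nonneg ha.le hb0.le) hC0) ha.le]
end

section
/- Let a ≥ b > 0 and define, for integers k ≥ 1, Z(k) = (1/k)·∑_{j=1}^k ∏_{s=j}^{k−1} (1 − b/(a+s)), where the empty product for j = k equals 1. Then limsup_{k→∞} Z(k) ≤ 1/(1+b). -/
open Filter Topology

/-- For `a ≥ b > 0`, the averaged products `Z(k) = (1/k)·∑_{j=1}^k ∏_{s=j}^{k−1}(1 − b/(a+s))`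
satisfy `limsup_{k→∞} Z(k) ≤ 1/(1+b)`. -/
theorem limsup_avg_products_le (a b : ℝ) (hb : 0 < b) (hab : b ≤ a) :
    limsup (fun k : ℕ =>
        (1 / (k : ℝ)) * ∑ j ∈ Finset.Icc 1 k,
          ∏ s ∈ Finset.Icc j (k - 1), (1 - b / (a + (s : ℝ)))) atTop ≤ 1 / (1 + b) := by
  have ha : 0 < a := lt_of_lt_of_le hb hab
  set f : ℕ → ℝ := fun s => 1 - b / (a + s) with hf
  set S : ℕ → ℝ := fun k => ∑ j ∈ Finset.Icc 1 k, ∏ s ∈ Finset.Icc j (k - 1), f s with hS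
  have hfpos : ∀ s : ℕ, 0 ≤ f s := by
    intro s
    have h1 : (0:ℝ) < a + s := by positivity
    have hba : b ≤ a + s := le_add_of_le_of_nonneg hab (Nat.cast_nonneg s)
    have : b / (a + s) ≤ 1 := (div_le_one h1).mpr hba
    simp only [hf]; linarith
  have hSpos : ∀ k, 0 ≤ S k :=
    fun k => Finset.sum_nonneg fun j _ => Finset.prod_nonneg fun s _ => hfpos s
  have key : ∀ m : ℕ, S (m + 1) ≤ (a + (m + 1)) / (1 + b) := by
    intro m
    induction m with
    | zero =>
        have h1 : S 1 = 1 := by simp [hS]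
        rw [h1, le_div_iff₀ (by linarith : (0:ℝ) < 1 + b)]
        push_cast; linarith
    | succ m ih =>
        have recur : S (m + 2) = S (m + 1) * f (m + 1) + 1 := by
          have h1 : S (m + 2) = ∑ j ∈ Finset.Icc 1 (m + 2),
              ∏ s ∈ Finset.Icc j (m + 1), f s := by simp [hS]
          rw [h1, Finset.sum_Icc_succ_top (by omega : 1 ≤ m + 2)]
          have hemp : Finset.Icc (m + 2) (m + 1) = ∅ := by
            rw [Finset.Icc_eq_empty]; omega
          rw [hemp, Finset.prod_empty]
          congr 1
          have h2 : S (m + 1) = ∑ j ∈ Finset.Icc 1 (m + 1),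
              ∏ s ∈ Finset.Icc j m, f s := by simp [hS]
          rw [h2, Finset.sum_mul]
          refine Finset.sum_congr rfl fun j hj => ?_
          have hjk : j ≤ m + 1 := (Finset.mem_Icc.mp hj).2
          exact Finset.prod_Icc_succ_top hjk f
        rw [recur]
        have hfle : S (m + 1) * f (m + 1) ≤ ((a + (m + 1)) / (1 + b)) * f (m + 1) :=
          mul_le_mul_of_nonneg_right ih (hfpos (m + 1))
        have heq : ((a + ((m:ℝ) + 1)) / (1 + b)) * f (m + 1) + 1
            = (a + ((m:ℝ) + 1 + 1)) / (1 + b) := by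
          simp only [hf]
          have h1 : (0:ℝ) < a + ((m:ℝ) + 1) := by positivity
          have h2 : (0:ℝ) < 1 + b := by linarith
          push_cast
          field_simp
          ring
        push_cast at heq ⊢
        linarith
  -- the comparison function
  set Z : ℕ → ℝ := fun k => (1 / (k : ℝ)) * ∑ j ∈ Finset.Icc 1 k,
      ∏ s ∈ Finset.Icc j (k - 1), (1 - b / (a + (s : ℝ))) with hZ
  set g : ℕ → ℝ := fun k => (a * (1 / (k : ℝ)) + 1) * (1 / (1 + b)) with hg
  have hZle : ∀ᶠ k in atTop, Z k ≤ g k := by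
    filter_upwards [eventually_ge_atTop 1] with k hk
    obtain ⟨m, rfl⟩ := Nat.exists_eq_add_of_le hk
    have hkpos : (0:ℝ) < (1 + m : ℕ) := by positivity
    have hZS : Z (1 + m) = (1 / ((1 + m : ℕ) : ℝ)) * S (1 + m) := rfl
    have h1 : S (1 + m) ≤ (a + ((1 + m : ℕ) : ℝ)) / (1 + b) := by
      have := key m
      have hc : (1 + m) = m + 1 := by omega
      rw [hc]
      push_cast at this ⊢
      linarith
    rw [hZS]
    have h2 : (1 / ((1 + m : ℕ) : ℝ)) * S (1 + m)
        ≤ (1 / ((1 + m : ℕ) : ℝ)) * ((a + ((1 + m : ℕ) : ℝ)) / (1 + b)) :=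
      mul_le_mul_of_nonneg_left h1 (by positivity)
    refine h2.trans_eq ?_
    simp only [hg]
    have h2b : (0:ℝ) < 1 + b := by linarith
    field_simp
  have hgt : Tendsto g atTop (𝓝 (1 / (1 + b))) := by
    have h0 : Tendsto (fun k : ℕ => 1 / (k : ℝ)) atTop (𝓝 0) :=
      tendsto_one_div_atTop_nhds_zero_nat
    have : Tendsto (fun k : ℕ => (a * (1 / (k : ℝ)) + 1) * (1 / (1 + b))) atTop
        (𝓝 ((a * 0 + 1) * (1 / (1 + b)))) :=
      (((h0.const_mul a).add tendsto_const_nhds).mul tendsto_const_nhds)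
    simpa [hg, one_div, mul_add] using this
  have hZnn : ∀ k, 0 ≤ Z k := by
    intro k
    exact mul_nonneg (by positivity) (hSpos k)
  calc limsup Z atTop ≤ limsup g atTop := by
        refine limsup_le_limsup hZle ?_ ?_
        · exact isCoboundedUnder_le_of_eventually_le atTop
            (Eventually.of_forall hZnn)
        · exact hgt.isBoundedUnder_le
    _ = 1 / (1 + b) := hgt.limsup_eq
end

section
/- Let λ > 0, b0 > 0, a ≥ b0·λ, τ ≥ 0, and β_s = b0/(a + s^τ). Define Z_β(k) = (1/k)·∑_{j=1}^k ∏_{s=j}^k (1 − λ·β_s)². Then: (i) if 0 ≤ τ < 1, lim_{k→∞} Z_β(k) = 0; (ii) if τ > 1, lim_{k→∞} Z_β(k) = 1; (iii) if τ = 1, liminf_{k→∞} Z_β(k) ≥ 1/(1 + 2·b0·λ). -/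
open Filter Finset Topology

private noncomputable def Sseq (g : ℕ → ℝ) (k : ℕ) : ℝ :=
  ∑ j ∈ Finset.Icc 1 k, ∏ s ∈ Finset.Icc j k, g s

private lemma Sseq_zero (g : ℕ → ℝ) : Sseq g 0 = 0 := by simp [Sseq]

private lemma Sseq_succ (g : ℕ → ℝ) (k : ℕ) :
    Sseq g (k + 1) = g (k + 1) * (Sseq g k + 1) := by
  unfold Sseq
  rw [Finset.sum_Icc_succ_top (Nat.le_add_left 1 k)]
  rw [Finset.sum_congr rfl fun j hj =>
      Finset.prod_Icc_succ_top (le_trans (Finset.mem_Icc.1 hj).2 (Nat.le_succ k)) g]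
  rw [Finset.Icc_self, Finset.prod_singleton, ← Finset.sum_mul]
  ring

private lemma Sseq_nonneg (g : ℕ → ℝ) (hg : ∀ s, 0 ≤ g s) (k : ℕ) : 0 ≤ Sseq g k :=
  Finset.sum_nonneg fun _ _ => Finset.prod_nonneg fun s _ => hg s

private lemma Sseq_le_card (g : ℕ → ℝ) (hg0 : ∀ s, 0 ≤ g s) (hg1 : ∀ s, g s ≤ 1) (k : ℕ) :
    Sseq g k ≤ k := by
  calc Sseq g k ≤ ∑ j ∈ Finset.Icc 1 k, 1 :=
        Finset.sum_le_sum fun j _ =>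
          Finset.prod_le_one (fun s _ => hg0 s) (fun s _ => hg1 s)
    _ = k := by simp

/-- Weierstrass product inequality. -/
private lemma one_sub_sum_le_prod (F : Finset ℕ) (g : ℕ → ℝ)
    (h0 : ∀ s ∈ F, 0 ≤ g s) (h1 : ∀ s ∈ F, g s ≤ 1) :
    1 - ∑ s ∈ F, (1 - g s) ≤ ∏ s ∈ F, g s := by
  classical
  induction F using Finset.induction with
  | empty => simp
  | @insert x F hx ih =>
    rw [Finset.sum_insert hx, Finset.prod_insert hx]
    have h0' : ∀ s ∈ F, 0 ≤ g s := fun s hs => h0 s (Finset.mem_insert_of_mem hs)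
    have h1' : ∀ s ∈ F, g s ≤ 1 := fun s hs => h1 s (Finset.mem_insert_of_mem hs)
    have ihF := ih h0' h1'
    have hgx0 : 0 ≤ g x := h0 x (Finset.mem_insert_self x F)
    have hgx1 : g x ≤ 1 := h1 x (Finset.mem_insert_self x F)
    have hsum : 0 ≤ ∑ s ∈ F, (1 - g s) :=
      Finset.sum_nonneg fun s hs => by linarith [h1' s hs]
    nlinarith [mul_le_mul_of_nonneg_left ihF hgx0]

/-- Part (i) induction bound. -/
private lemma Sseq_le (c a τ : ℝ) (hc : 0 < c) (hca : c ≤ a) (hτ : 0 ≤ τ) (k : ℕ) :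
    Sseq (fun s => (1 - c / (a + (s : ℝ) ^ τ)) ^ 2) k ≤ (a + (k : ℝ) ^ τ) / c := by
  have ha : 0 < a := lt_of_lt_of_le hc hca
  induction k with
  | zero =>
    rw [Sseq_zero]
    have : (0:ℝ) ≤ ((0:ℕ):ℝ) ^ τ := Real.rpow_nonneg (by norm_num) τ
    positivity
  | succ k ih =>
    rw [Sseq_succ]
    have hcast : (((k+1:ℕ)):ℝ) = (k:ℝ) + 1 := by push_cast; ring
    set A : ℝ := a + ((k:ℝ) + 1) ^ τ with hA
    have hpow0 : (0:ℝ) ≤ ((k:ℝ) + 1) ^ τ := Real.rpow_nonneg (by positivity) τ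
    have hAa : a ≤ A := by linarith
    have hApos : 0 < A := lt_of_lt_of_le ha hAa
    have hcA : c ≤ A := le_trans hca hAa
    have hmono : (k:ℝ) ^ τ ≤ ((k:ℝ) + 1) ^ τ :=
      Real.rpow_le_rpow (Nat.cast_nonneg k) (by linarith) hτ
    have hg0 : (0:ℝ) ≤ 1 - c / A := by
      rw [sub_nonneg, div_le_one hApos]; exact hcA
    have hg1 : 1 - c / A ≤ 1 := by
      have : 0 ≤ c / A := by positivity
      linarith
    have hgsq : (1 - c / A) ^ 2 ≤ 1 - c / A := by nlinarith
    have hgnn : (0:ℝ) ≤ (1 - c / A) ^ 2 := sq_nonneg _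
    have step1 : (1 - c / A) ^ 2 *
        (Sseq (fun s => (1 - c / (a + (s : ℝ) ^ τ)) ^ 2) k + 1)
        ≤ (1 - c / A) * ((a + (k:ℝ) ^ τ) / c + 1) := by
      have hS1 : 0 ≤ Sseq (fun s => (1 - c / (a + (s : ℝ) ^ τ)) ^ 2) k + 1 := by
        have := Sseq_nonneg (fun s => (1 - c / (a + (s : ℝ) ^ τ)) ^ 2)
          (fun s => sq_nonneg _) k
        linarith
      calc (1 - c / A) ^ 2 * (Sseq _ k + 1)
          ≤ (1 - c / A) * (Sseq _ k + 1) := mul_le_mul_of_nonneg_right hgsq hS1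
        _ ≤ (1 - c / A) * ((a + (k:ℝ) ^ τ) / c + 1) :=
            mul_le_mul_of_nonneg_left (by linarith) hg0
    have step2 : (1 - c / A) * ((a + (k:ℝ) ^ τ) / c + 1) ≤ A / c := by
      rw [div_add_one hc.ne', ← sub_nonneg]
      have hexp : A / c - (1 - c / A) * ((a + (k:ℝ) ^ τ + c) / c)
          = (A * A - (A - c) * (a + (k:ℝ) ^ τ + c)) / (c * A) := by
        field_simp
      rw [hexp]
      apply div_nonneg _ (by positivity)
      nlinarith
    calc (1 - c / (a + (((k+1:ℕ)):ℝ) ^ τ)) ^ 2 * (Sseq _ k + 1)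
        = (1 - c / A) ^ 2 * (Sseq _ k + 1) := by rw [hcast]
      _ ≤ A / c := le_trans step1 step2
      _ = (a + (((k+1:ℕ)):ℝ) ^ τ) / c := by rw [hcast]

/-- Part (iii) induction bound (τ = 1). -/
private lemma Sseq_ge (c a : ℝ) (hc : 0 < c) (hca : c ≤ a) (k : ℕ) :
    ((k : ℝ) - max 1 (2 * c)) / (1 + 2 * c)
      ≤ Sseq (fun s => (1 - c / (a + (s : ℝ))) ^ 2) k := by
  have ha : 0 < a := lt_of_lt_of_le hc hca
  have hD : (0:ℝ) < 1 + 2 * c := by linarith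
  set M : ℝ := max 1 (2 * c) with hM
  have hM1 : (1:ℝ) ≤ M := le_max_left _ _
  have hM2 : 2 * c ≤ M := le_max_right _ _
  induction k with
  | zero =>
    rw [Sseq_zero]
    apply div_nonpos_of_nonpos_of_nonneg <;> [skip; linarith]
    simp only [Nat.cast_zero]; linarith
  | succ k ih =>
    rw [Sseq_succ]
    have hcast : (((k+1:ℕ)):ℝ) = (k:ℝ) + 1 := by push_cast; ring
    set K : ℝ := (k:ℝ) with hK
    have hK0 : 0 ≤ K := Nat.cast_nonneg k
    set A : ℝ := a + (K + 1) with hA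
    have hApos : 0 < A := by simp only [hA]; linarith
    have hcA : c < A := by simp only [hA]; linarith
    have hg0 : (0:ℝ) ≤ 1 - c / A := by
      rw [sub_nonneg, div_le_one hApos]; linarith
    have hg1 : 1 - c / A ≤ 1 := by
      have : 0 ≤ c / A := by positivity
      linarith
    have key : (K + 1 - M) / (1 + 2 * c) ≤ (1 - c / A) ^ 2 * ((K - M) / (1 + 2 * c) + 1) := by
      rw [div_add_one hD.ne']
      rw [← mul_div_assoc, div_le_div_iff_of_pos_right hD]
      -- goal : K + 1 - M ≤ (1 - c/A)^2 * (K - M + (1 + 2*c))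
      set Y : ℝ := K + 1 - M with hY
      have hre : K - M + (1 + 2 * c) = Y + 2 * c := by simp only [hY]; ring
      rw [hre]
      rcases le_or_gt Y 0 with hYle | hYpos
      · rcases le_or_gt 0 (Y + 2 * c) with h2 | h2
        · nlinarith [mul_nonneg (sq_nonneg (1 - c / A)) h2]
        · nlinarith [mul_le_mul_of_nonpos_right (show (1 - c / A) ^ 2 ≤ 1 by nlinarith) h2.le]
      · have hAY : Y + 2 * c ≤ A := by
          simp only [hY, hA]; linarith
        have hu : c / A * A = c := div_mul_cancel₀ c hApos.ne'
        have hupos : 0 < c / A := by positivity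
        have key2 : Y ≤ (1 - 2 * (c / A)) * (Y + 2 * c) := by
          nlinarith [mul_le_mul_of_nonneg_left hAY hupos.le]
        have key3 : (1 - 2 * (c / A)) * (Y + 2 * c) ≤ (1 - c / A) ^ 2 * (Y + 2 * c) := by
          apply mul_le_mul_of_nonneg_right _ (by linarith)
          nlinarith [sq_nonneg (c / A)]
        linarith
    have hSk := ih
    have step : (1 - c / A) ^ 2 * ((K - M) / (1 + 2 * c) + 1)
        ≤ (1 - c / A) ^ 2 * (Sseq (fun s => (1 - c / (a + (s : ℝ))) ^ 2) k + 1) := by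
      apply mul_le_mul_of_nonneg_left _ (sq_nonneg _)
      linarith
    calc ((((k+1:ℕ)):ℝ) - M) / (1 + 2 * c) = (K + 1 - M) / (1 + 2 * c) := by rw [hcast]
      _ ≤ (1 - c / A) ^ 2 * ((K - M) / (1 + 2 * c) + 1) := key
      _ ≤ (1 - c / A) ^ 2 * (Sseq _ k + 1) := step
      _ = (1 - c / (a + (((k+1:ℕ)):ℝ))) ^ 2 * (Sseq _ k + 1) := by rw [hcast]

set_option maxHeartbeats 1000000 in
/-- Behavior of `Z_β(k) = (1/k)·∑_{j=1}^k ∏_{s=j}^k (1 − λ·β_s)²` for the weight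
sequence `β_s = b0/(a+s^τ)`: it tends to `0` if `τ < 1`, to `1` if `τ > 1`, and has
`liminf ≥ 1/(1+2b0λ)` if `τ = 1`. -/
theorem Zbeta_asymptotics (lam b0 a τ : ℝ) (hlam : 0 < lam) (hb0 : 0 < b0)
    (ha : b0 * lam ≤ a) (hτ : 0 ≤ τ)
    (Z : ℕ → ℝ)
    (hZ : ∀ k : ℕ, Z k = (1 / (k : ℝ)) * ∑ j ∈ Finset.Icc 1 k,
        ∏ s ∈ Finset.Icc j k, (1 - lam * (b0 / (a + (s : ℝ) ^ τ))) ^ 2) :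
    (τ < 1 → Tendsto Z atTop (nhds 0)) ∧
    (1 < τ → Tendsto Z atTop (nhds 1)) ∧
    (τ = 1 → 1 / (1 + 2 * b0 * lam) ≤ liminf Z atTop) := by
  set c : ℝ := b0 * lam with hc_def
  have hc : 0 < c := by positivity
  have ha0 : 0 < a := lt_of_lt_of_le hc ha
  have hZS : ∀ k, Z k = (1 / (k : ℝ)) * Sseq (fun s => (1 - c / (a + (s : ℝ) ^ τ)) ^ 2) k := by
    intro k
    rw [hZ k]
    congr 1
    apply Finset.sum_congr rfl
    intro j _
    apply Finset.prod_congr rfl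
    intro s _
    rw [mul_div_assoc', mul_comm lam b0]
  -- basic facts about g for s ≥ 1
  have hAx : ∀ s : ℕ, 0 < a + (s : ℝ) ^ τ := by
    intro s
    have : (0:ℝ) ≤ (s:ℝ) ^ τ := Real.rpow_nonneg (Nat.cast_nonneg s) τ
    linarith
  have hg0 : ∀ s : ℕ, (0:ℝ) ≤ (1 - c / (a + (s : ℝ) ^ τ)) ^ 2 := fun s => sq_nonneg _
  have hg1 : ∀ s : ℕ, (1 - c / (a + (s : ℝ) ^ τ)) ^ 2 ≤ 1 := by
    intro s
    have h1 : c / (a + (s : ℝ) ^ τ) ≤ 1 := by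
      rw [div_le_one (hAx s)]
      have : (0:ℝ) ≤ (s:ℝ) ^ τ := Real.rpow_nonneg (Nat.cast_nonneg s) τ
      linarith
    have h2 : 0 < c / (a + (s : ℝ) ^ τ) := div_pos hc (hAx s)
    nlinarith
  have hZnn : ∀ k, 0 ≤ Z k := by
    intro k
    rw [hZS k]
    exact mul_nonneg (by positivity) (Sseq_nonneg _ hg0 k)
  have hZle1 : ∀ k : ℕ, 1 ≤ k → Z k ≤ 1 := by
    intro k hk
    rw [hZS k]
    have hkpos : (0:ℝ) < (k:ℝ) := by exact_mod_cast hk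
    calc (1 / (k:ℝ)) * Sseq _ k ≤ (1 / (k:ℝ)) * k :=
          mul_le_mul_of_nonneg_left (Sseq_le_card _ hg0 hg1 k) (by positivity)
      _ = 1 := by field_simp
  refine ⟨?_, ?_, ?_⟩
  · -- part (i) : τ < 1
    intro hτ1
    have hub : Tendsto (fun k : ℕ => (a / c) * ((k:ℝ))⁻¹ + (1 / c) * (k:ℝ) ^ (τ - 1))
        atTop (𝓝 0) := by
      have l1 : Tendsto (fun k : ℕ => ((k:ℝ))⁻¹) atTop (𝓝 0) :=
        tendsto_inv_atTop_zero.comp tendsto_natCast_atTop_atTop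
      have l2 : Tendsto (fun k : ℕ => (k:ℝ) ^ (τ - 1)) atTop (𝓝 0) := by
        have := (tendsto_rpow_neg_atTop (show (0:ℝ) < 1 - τ by linarith)).comp
          (tendsto_natCast_atTop_atTop (R := ℝ))
        simpa [Function.comp_def, neg_sub] using this
      have := ((l1.const_mul (a / c)).add (l2.const_mul (1 / c)))
      simpa using this
    apply tendsto_of_tendsto_of_tendsto_of_le_of_le' tendsto_const_nhds hub
    · exact Eventually.of_forall hZnn
    · filter_upwards [eventually_ge_atTop 1] with k hk
      have hkpos : (0:ℝ) < (k:ℝ) := by exact_mod_cast hk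
      rw [hZS k]
      have h1 : Sseq (fun s => (1 - c / (a + (s : ℝ) ^ τ)) ^ 2) k ≤ (a + (k:ℝ) ^ τ) / c :=
        Sseq_le c a τ hc ha hτ k
      have h2 : (1 / (k:ℝ)) * ((a + (k:ℝ) ^ τ) / c)
          = (a / c) * ((k:ℝ))⁻¹ + (1 / c) * (k:ℝ) ^ (τ - 1) := by
        rw [Real.rpow_sub hkpos, Real.rpow_one]
        simp only [div_eq_mul_inv, one_mul]
        ring
      calc (1 / (k:ℝ)) * Sseq _ k ≤ (1 / (k:ℝ)) * ((a + (k:ℝ) ^ τ) / c) :=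
            mul_le_mul_of_nonneg_left h1 (by positivity)
        _ = _ := h2
  · -- part (ii) : 1 < τ
    intro hτ1
    set v : ℕ → ℝ := fun s => 2 * c * (((s:ℝ) ^ τ))⁻¹ with hv_def
    have hvnn : ∀ s, 0 ≤ v s := by
      intro s
      have : (0:ℝ) ≤ (s:ℝ) ^ τ := Real.rpow_nonneg (Nat.cast_nonneg s) τ
      positivity
    have hvsum : Summable v := (Real.summable_nat_rpow_inv.mpr hτ1).mul_left (2 * c)
    set T : ℕ → ℝ := fun j => ∑' n : ℕ, v (n + j) with hT_def
    have hTto : Tendsto T atTop (𝓝 0) := tendsto_sum_nat_add v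
    have hT1to : Tendsto (fun i : ℕ => T (i + 1)) atTop (𝓝 0) :=
      hTto.comp (tendsto_add_atTop_nat 1)
    have hces : Tendsto (fun k : ℕ => ((k:ℝ))⁻¹ * ∑ i ∈ Finset.range k, T (i + 1))
        atTop (𝓝 0) := hT1to.cesaro
    have hlow : Tendsto (fun k : ℕ => 1 - ((k:ℝ))⁻¹ * ∑ i ∈ Finset.range k, T (i + 1))
        atTop (𝓝 1) := by
      have := tendsto_const_nhds (x := (1:ℝ)) (f := atTop (α := ℕ))
      simpa using this.sub hces
    apply tendsto_of_tendsto_of_tendsto_of_le_of_le' hlow tendsto_const_nhds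
    · -- lower bound eventually
      filter_upwards [eventually_ge_atTop 1] with k hk
      have hkpos : (0:ℝ) < (k:ℝ) := by exact_mod_cast hk
      rw [hZS k]
      -- P_j ≥ 1 - T j for j ∈ Icc 1 k
      have hP : ∀ j ∈ Finset.Icc 1 k,
          1 - T j ≤ ∏ s ∈ Finset.Icc j k, (1 - c / (a + (s : ℝ) ^ τ)) ^ 2 := by
        intro j hj
        have hj1 : 1 ≤ j := (Finset.mem_Icc.1 hj).1
        have w := one_sub_sum_le_prod (Finset.Icc j k)
          (fun s => (1 - c / (a + (s : ℝ) ^ τ)) ^ 2)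
          (fun s _ => hg0 s) (fun s _ => hg1 s)
        have hsum_le : ∑ s ∈ Finset.Icc j k, (1 - (1 - c / (a + (s : ℝ) ^ τ)) ^ 2) ≤ T j := by
          have t1 : ∑ s ∈ Finset.Icc j k, (1 - (1 - c / (a + (s : ℝ) ^ τ)) ^ 2)
              ≤ ∑ s ∈ Finset.Icc j k, v s := by
            apply Finset.sum_le_sum
            intro s hs
            have hs1 : 1 ≤ s := le_trans hj1 (Finset.mem_Icc.1 hs).1
            have hsp : (0:ℝ) < (s:ℝ) ^ τ :=
              Real.rpow_pos_of_pos (by exact_mod_cast hs1) τ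
            have hu1 : c / (a + (s : ℝ) ^ τ) ≤ c / ((s:ℝ) ^ τ) := by
              apply div_le_div_of_nonneg_left hc.le hsp
              linarith [hAx s]
            have hu0 : 0 < c / (a + (s : ℝ) ^ τ) := div_pos hc (hAx s)
            have : 1 - (1 - c / (a + (s : ℝ) ^ τ)) ^ 2 ≤ 2 * (c / (a + (s : ℝ) ^ τ)) := by
              nlinarith [sq_nonneg (c / (a + (s : ℝ) ^ τ))]
            calc 1 - (1 - c / (a + (s : ℝ) ^ τ)) ^ 2
                ≤ 2 * (c / (a + (s : ℝ) ^ τ)) := this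
              _ ≤ 2 * (c / ((s:ℝ) ^ τ)) := by linarith
              _ = v s := by rw [hv_def]; simp [div_eq_mul_inv]; ring
          have t2 : ∑ s ∈ Finset.Icc j k, v s ≤ T j := by
            have hIcc : Finset.Icc j k = Finset.Ico j (k + 1) := by
              rw [Finset.Ico_add_one_right_eq_Icc]
            rw [hIcc, Finset.sum_Ico_eq_sum_range]
            have : ∀ i, v (j + i) = (fun n => v (n + j)) i := by
              intro i; simp [add_comm]
            rw [Finset.sum_congr rfl fun i _ => this i]
            exact ((summable_nat_add_iff j).mpr hvsum).sum_le_tsum _ (fun n _ => hvnn _)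
          linarith
        linarith
      have hSlow : (k:ℝ) - ∑ i ∈ Finset.range k, T (i + 1)
          ≤ Sseq (fun s => (1 - c / (a + (s : ℝ) ^ τ)) ^ 2) k := by
        have hs := Finset.sum_le_sum hP
        have e1 : ∑ j ∈ Finset.Icc 1 k, (1 - T j)
            = (k:ℝ) - ∑ i ∈ Finset.range k, T (i + 1) := by
          rw [Finset.sum_sub_distrib]
          congr 1
          · simp
          · rw [show Finset.Icc 1 k = Finset.Ico 1 (k+1) from (Finset.Ico_add_one_right_eq_Icc 1 k).symm,
              Finset.sum_Ico_eq_sum_range]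
            simp [add_comm]
        rw [← e1]
        exact hs
      have : 1 - ((k:ℝ))⁻¹ * ∑ i ∈ Finset.range k, T (i + 1)
          = (1 / (k:ℝ)) * ((k:ℝ) - ∑ i ∈ Finset.range k, T (i + 1)) := by
        field_simp
      rw [this]
      exact mul_le_mul_of_nonneg_left hSlow (by positivity)
    · filter_upwards [eventually_ge_atTop 1] with k hk
      exact hZle1 k hk
  · -- part (iii) : τ = 1
    intro hτ1
    subst hτ1
    have hD : (0:ℝ) < 1 + 2 * c := by linarith
    set M : ℝ := max 1 (2 * c) with hM_def
    have hM1 : (1:ℝ) ≤ M := le_max_left _ _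
    set q : ℕ → ℝ := fun k => (1 / (1 + 2 * c)) * (1 - M * ((k:ℝ))⁻¹) with hq_def
    have hqto : Tendsto q atTop (𝓝 (1 / (1 + 2 * c))) := by
      rw [hq_def]
      have l1 : Tendsto (fun k : ℕ => ((k:ℝ))⁻¹) atTop (𝓝 0) :=
        tendsto_inv_atTop_zero.comp tendsto_natCast_atTop_atTop
      have := ((tendsto_const_nhds (x := (1:ℝ)) (f := atTop (α := ℕ))).sub
        (l1.const_mul M)).const_mul (1 / (1 + 2 * c))
      simpa using this
    have hqZ : ∀ᶠ k in atTop, q k ≤ Z k := by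
      filter_upwards [eventually_ge_atTop 1] with k hk
      have hkpos : (0:ℝ) < (k:ℝ) := by exact_mod_cast hk
      have hS : ((k : ℝ) - M) / (1 + 2 * c)
          ≤ Sseq (fun s => (1 - c / (a + (s : ℝ))) ^ 2) k := Sseq_ge c a hc ha k
      have hkne : ((k:ℝ)) ≠ 0 := hkpos.ne'
      have e0 : Sseq (fun s => (1 - c / (a + (s : ℝ) ^ (1:ℝ))) ^ 2) k
          = Sseq (fun s => (1 - c / (a + (s : ℝ))) ^ 2) k := by
        unfold Sseq
        apply Finset.sum_congr rfl
        intro j _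
        apply Finset.prod_congr rfl
        intro s _
        simp only [Real.rpow_one]
      have h3 : 1 - M * ((k:ℝ))⁻¹ = ((k:ℝ) - M) / (k:ℝ) := by
        rw [sub_div, div_self hkne, div_eq_mul_inv]
      have e1 : q k = (1 / (k:ℝ)) * (((k:ℝ) - M) / (1 + 2 * c)) := by
        rw [hq_def]
        simp only []
        rw [h3]
        ring
      rw [hZS k, e0, e1]
      exact mul_le_mul_of_nonneg_left hS (by positivity)
    have goal_eq : 1 / (1 + 2 * b0 * lam) = 1 / (1 + 2 * c) := by
      rw [hc_def]; ring_nf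
    rw [goal_eq, ← hqto.liminf_eq]
    exact liminf_le_liminf hqZ hqto.isBoundedUnder_ge
      (IsBoundedUnder.isCoboundedUnder_ge
        ⟨1, eventually_map.2 ((eventually_ge_atTop 1).mono fun k hk => hZle1 k hk)⟩)
end

section
/- Let μ_k ∈ ℝ and σ_k > 0 for k ≥ 1, and let P_k be the Gaussian probability measure on ℝ with mean μ_k and variance σ_k². If the sequence (μ_k) is bounded and there exist τ ∈ (0,1), c > 0, and K such that σ_k² ≥ c/k^τ for all k ≥ K, then limsup_{k→∞} −(1/k)·log P_k((−∞, 0]) ≤ 0; that is, P_k((−∞,0]) cannot decay exponentially fast in k. -/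
open Filter ProbabilityTheory MeasureTheory Real

lemma gauss_tail_lb (m s M : ℝ) (hs : 0 < s) (hM : 0 ≤ M) (hm : |m| ≤ M) :
    Real.exp (-(s + M) ^ 2 / (2 * s ^ 2)) / Real.sqrt (2 * π) ≤
      ((gaussianReal m ((s ^ 2).toNNReal)) (Set.Iic 0)).toReal := by
  set v : NNReal := (s ^ 2).toNNReal with hv
  have hvne : v ≠ 0 := by
    simp [hv, Real.toNNReal_eq_zero, not_le, pow_pos hs, hs.ne']
  have hvcoe : (v : ℝ) = s ^ 2 := Real.coe_toNNReal _ (sq_nonneg s)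
  have hIcc : IntegrableOn (gaussianPDFReal m v) (Set.Icc (-s) 0) :=
    (integrable_gaussianPDFReal m v).integrableOn
  have hsqrt : Real.sqrt (2 * π * v) = Real.sqrt (2 * π) * s := by
    rw [hvcoe, Real.sqrt_mul (by positivity), Real.sqrt_sq hs.le]
  have hπ : 0 < Real.sqrt (2 * π) := Real.sqrt_pos.2 (by positivity)
  -- pointwise lower bound on [-s, 0]
  have hlb : ∀ x ∈ Set.Icc (-s) 0,
      (Real.sqrt (2 * π * v))⁻¹ * Real.exp (-(s + M) ^ 2 / (2 * v)) ≤ gaussianPDFReal m v x := by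
    intro x hx
    have hxabs : |x| ≤ s := abs_le.2 ⟨hx.1, hx.2.trans hs.le⟩
    have h1 : |x - m| ≤ s + M := (abs_sub _ _).trans (add_le_add hxabs hm)
    have h2 : (x - m) ^ 2 ≤ (s + M) ^ 2 := by
      rw [← sq_abs (x - m)]
      exact pow_le_pow_left₀ (abs_nonneg _) h1 2
    unfold gaussianPDFReal
    have hv0 : (0:ℝ) < v := by rw [hvcoe]; positivity
    gcongr
  have hvol : (volume (Set.Icc (-s) (0:ℝ))).toReal = s := by
    rw [Real.volume_Icc]
    rw [ENNReal.toReal_ofReal (by linarith)]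
    ring
  have step1 : Real.exp (-(s + M) ^ 2 / (2 * s ^ 2)) / Real.sqrt (2 * π) ≤
      ∫ x in Set.Icc (-s) 0, gaussianPDFReal m v x := by
    have := setIntegral_ge_of_const_le (μ := volume) measurableSet_Icc
      (by rw [Real.volume_Icc]; exact ENNReal.ofReal_ne_top) hlb hIcc
    refine le_trans (le_of_eq ?_) this
    rw [measureReal_def, hvol, hsqrt, hvcoe, smul_eq_mul]
    field_simp
  have step2 : (∫ x in Set.Icc (-s) 0, gaussianPDFReal m v x) ≤
      ∫ x in Set.Iic 0, gaussianPDFReal m v x := by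
    apply setIntegral_mono_set (integrable_gaussianPDFReal m v).integrableOn
      (ae_of_all _ fun x => gaussianPDFReal_nonneg m v x)
    exact HasSubset.Subset.eventuallyLE (fun x hx => hx.2)
  have hmeas : ((gaussianReal m v) (Set.Iic 0)).toReal = ∫ x in Set.Iic 0, gaussianPDFReal m v x := by
    rw [gaussianReal_apply_eq_integral m hvne, ENNReal.toReal_ofReal
      (setIntegral_nonneg measurableSet_Iic fun x _ => gaussianPDFReal_nonneg m v x)]
  rw [hmeas]
  exact step1.trans step2

/-- If a sequence of Gaussian measures has bounded means and variances decaying no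
faster than `c/k^τ` with `τ ∈ (0,1)`, then the left-tail probabilities `P_k((−∞,0])`
cannot decay exponentially fast: `limsup −(1/k)·log P_k((−∞,0]) ≤ 0`. -/
theorem gaussian_subexponential_decay (μ σ : ℕ → ℝ) (hσ : ∀ k, 0 < σ k)
    (hbdd : ∃ M : ℝ, ∀ k, |μ k| ≤ M)
    (τ c : ℝ) (hτ0 : 0 < τ) (hτ1 : τ < 1) (hc : 0 < c) (K : ℕ)
    (hvar : ∀ k : ℕ, K ≤ k → c / (k : ℝ) ^ τ ≤ σ k ^ 2) :
    limsup (fun k : ℕ =>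
        -(1 / (k : ℝ)) *
          Real.log ((gaussianReal (μ k) ((σ k ^ 2).toNNReal)) (Set.Iic 0)).toReal) atTop ≤ 0 := by
  obtain ⟨M, hM⟩ := hbdd
  have hM0 : 0 ≤ M := (abs_nonneg _).trans (hM 0)
  set f : ℕ → ℝ := fun k =>
    -(1 / (k : ℝ)) *
      Real.log ((gaussianReal (μ k) ((σ k ^ 2).toNNReal)) (Set.Iic 0)).toReal with hf
  set h : ℕ → ℝ := fun k =>
    (1 / (k : ℝ)) * (1 + Real.log (Real.sqrt (2 * π))) + (M ^ 2 / c) * (k : ℝ) ^ (τ - 1)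
    with hhdef
  have hπ : 0 < Real.sqrt (2 * π) := Real.sqrt_pos.2 (by positivity)
  have hfh : f ≤ᶠ[atTop] h := by
    filter_upwards [eventually_ge_atTop (max K 1)] with k hk
    have hk1 : 1 ≤ k := le_trans (le_max_right _ _) hk
    have hkK : K ≤ k := le_trans (le_max_left _ _) hk
    have hkpos : (0:ℝ) < k := by exact_mod_cast hk1
    have hsk := hσ k
    -- lower bound on the probability
    have hlb := gauss_tail_lb (μ k) (σ k) M hsk hM0 (hM k)
    have hposlb : 0 < Real.exp (-(σ k + M) ^ 2 / (2 * σ k ^ 2)) / Real.sqrt (2 * π) := by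
      positivity
    have hlog : -(σ k + M) ^ 2 / (2 * σ k ^ 2) - Real.log (Real.sqrt (2 * π)) ≤
        Real.log ((gaussianReal (μ k) ((σ k ^ 2).toNNReal)) (Set.Iic 0)).toReal := by
      calc -(σ k + M) ^ 2 / (2 * σ k ^ 2) - Real.log (Real.sqrt (2 * π))
          = Real.log (Real.exp (-(σ k + M) ^ 2 / (2 * σ k ^ 2)) / Real.sqrt (2 * π)) := by
            rw [Real.log_div (Real.exp_ne_zero _) (ne_of_gt hπ), Real.log_exp]
        _ ≤ _ := Real.log_le_log hposlb hlb
    have hfbound : f k ≤ (1 / (k : ℝ)) *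
        ((σ k + M) ^ 2 / (2 * σ k ^ 2) + Real.log (Real.sqrt (2 * π))) := by
      have h1k : 0 ≤ 1 / (k : ℝ) := by positivity
      have : -((σ k + M) ^ 2 / (2 * σ k ^ 2) + Real.log (Real.sqrt (2 * π))) ≤
          Real.log ((gaussianReal (μ k) ((σ k ^ 2).toNNReal)) (Set.Iic 0)).toReal := by
        refine le_trans (le_of_eq ?_) hlog; ring
      have := mul_le_mul_of_nonneg_left (neg_le_neg this) h1k
      simp only [neg_neg] at this
      calc f k = (1 / (k : ℝ)) *
          (-Real.log ((gaussianReal (μ k) ((σ k ^ 2).toNNReal)) (Set.Iic 0)).toReal) := by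
            simp only [hf]; ring
        _ ≤ _ := this
    -- bound the variance term
    have hktpos : (0:ℝ) < (k : ℝ) ^ τ := Real.rpow_pos_of_pos hkpos τ
    have hvk : c / (k : ℝ) ^ τ ≤ σ k ^ 2 := hvar k hkK
    have hσ2pos : (0:ℝ) < σ k ^ 2 := by positivity
    have hinv : 1 / σ k ^ 2 ≤ (k : ℝ) ^ τ / c := by
      rw [div_le_div_iff₀ hσ2pos hc]
      have := mul_le_mul_of_nonneg_left hvk hktpos.le
      rw [mul_div_cancel₀ _ (ne_of_gt hktpos)] at this
      linarith [this]
    have hsq : (σ k + M) ^ 2 / (2 * σ k ^ 2) ≤ 1 + M ^ 2 / σ k ^ 2 := by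
      rw [div_le_iff₀ (by positivity)]
      have h2 : M ^ 2 / σ k ^ 2 * σ k ^ 2 = M ^ 2 := div_mul_cancel₀ _ (ne_of_gt hσ2pos)
      nlinarith [sq_nonneg (σ k - M)]
    have hMσ : M ^ 2 / σ k ^ 2 ≤ M ^ 2 * ((k : ℝ) ^ τ / c) := by
      rw [div_eq_mul_one_div]
      exact mul_le_mul_of_nonneg_left hinv (sq_nonneg M)
    have hrpow : (1 / (k : ℝ)) * (M ^ 2 * ((k : ℝ) ^ τ / c)) = (M ^ 2 / c) * (k : ℝ) ^ (τ - 1) := by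
      rw [Real.rpow_sub hkpos, Real.rpow_one]
      ring
    calc f k ≤ (1 / (k : ℝ)) *
        ((σ k + M) ^ 2 / (2 * σ k ^ 2) + Real.log (Real.sqrt (2 * π))) := hfbound
      _ ≤ (1 / (k : ℝ)) * (1 + M ^ 2 * ((k : ℝ) ^ τ / c) + Real.log (Real.sqrt (2 * π))) := by
          have h1k : 0 ≤ 1 / (k : ℝ) := by positivity
          apply mul_le_mul_of_nonneg_left _ h1k
          have := hsq.trans (by linarith : 1 + M ^ 2 / σ k ^ 2 ≤ 1 + M ^ 2 * ((k : ℝ) ^ τ / c))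
          linarith
      _ = h k := by simp only [hhdef]; rw [← hrpow]; ring
  have hh0 : Tendsto h atTop (nhds 0) := by
    rw [hhdef]
    have t1 : Tendsto (fun k : ℕ => (1 / (k : ℝ)) * (1 + Real.log (Real.sqrt (2 * π))))
        atTop (nhds 0) := by
      have : Tendsto (fun n : ℕ => 1 / (n : ℝ)) atTop (nhds 0) := tendsto_one_div_atTop_nhds_zero_nat
      simpa using this.mul_const (1 + Real.log (Real.sqrt (2 * π)))
    have t2 : Tendsto (fun k : ℕ => (M ^ 2 / c) * (k : ℝ) ^ (τ - 1)) atTop (nhds 0) := by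
      have hneg : Tendsto (fun x : ℝ => x ^ (τ - 1)) atTop (nhds 0) := by
        have := tendsto_rpow_neg_atTop (y := 1 - τ) (by linarith)
        simpa using this
      have := (hneg.comp tendsto_natCast_atTop_atTop).const_mul (M ^ 2 / c)
      simpa using this
    simpa using t1.add t2
  have hvbdd : IsBoundedUnder (· ≤ ·) atTop h := hh0.isBoundedUnder_le
  have hf0 : ∀ k, 0 ≤ f k := by
    intro k
    have hp0 : (0:ℝ) ≤ ((gaussianReal (μ k) ((σ k ^ 2).toNNReal)) (Set.Iic 0)).toReal :=
      ENNReal.toReal_nonneg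
    have hp1 : ((gaussianReal (μ k) ((σ k ^ 2).toNNReal)) (Set.Iic 0)).toReal ≤ 1 := by
      have : (gaussianReal (μ k) ((σ k ^ 2).toNNReal)) (Set.Iic 0) ≤ 1 := prob_le_one
      exact ENNReal.toReal_le_of_le_ofReal zero_le_one (by simpa using this)
    have hlog0 : Real.log ((gaussianReal (μ k) ((σ k ^ 2).toNNReal)) (Set.Iic 0)).toReal ≤ 0 :=
      Real.log_nonpos hp0 hp1
    have h1k : 0 ≤ 1 / (k : ℝ) := by positivity
    simp only [hf, neg_mul]
    exact neg_nonneg.2 (mul_nonpos_of_nonneg_of_nonpos h1k hlog0)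
  have hcob : IsCoboundedUnder (· ≤ ·) atTop f :=
    (isBoundedUnder_of ⟨0, hf0⟩).isCoboundedUnder_le
  calc limsup f atTop ≤ limsup h atTop :=
        limsup_le_limsup hfh hcob hvbdd
    _ = 0 := hh0.limsup_eq
end
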